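/- Let T > 0 and let (λ_n)_{n≥1} be a strictly increasing sequence of real numbers with λ_1 > 0. Then for every m ≥ 1 and every integer M ≥ m: d_{T,m} ≤ ( ∏_{i=1, i≠m}^{M+1} |λ_i − λ_m| ) · ( ∫_0^T (s^{2M}/(M!)²) e^{−2λ_1 s} ds )^{1/2} ≤ ( ∏_{i=1, i≠m}^{M+1} |λ_i − λ_m| ) · (T^M/M!) · √( 2T / (2M + 1 + 2Tλ_1) ). -/

import Mathlib

set_option maxHeartbeats 1000000
open Finset MeasureTheory



open Polynomial Finset

lemma coeff_basis (s : Finset ℕ) (v : ℕ → ℝ) (hvs : Set.InjOn v s) {i : ℕ} (hi : i ∈ s) :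
    (Lagrange.basis s v i).coeff (#s - 1) = ∏ j ∈ s.erase i, (v i - v j)⁻¹ := by
  rw [← Lagrange.natDegree_basis hvs hi, Polynomial.coeff_natDegree, Lagrange.basis,
    Polynomial.leadingCoeff_prod]
  refine Finset.prod_congr rfl fun j hj => ?_
  have hne : v i ≠ v j := fun h => (Finset.mem_erase.mp hj).1
    (hvs ((Finset.mem_erase.mp hj).2) hi h.symm)
  rw [Lagrange.basisDivisor, Polynomial.leadingCoeff_mul, Polynomial.leadingCoeff_C,
    Polynomial.leadingCoeff_X_sub_C, mul_one]

lemma sum_inv_prod_eq_zero (s : Finset ℕ) (v : ℕ → ℝ) (hvs : Set.InjOn v s)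
    (hs : 2 ≤ #s) : ∑ i ∈ s, ∏ j ∈ s.erase i, (v i - v j)⁻¹ = 0 := by
  have h1 := Lagrange.sum_basis hvs (Finset.card_pos.mp (by omega))
  have h2 := congrArg (fun p => Polynomial.coeff p (#s - 1)) h1
  simp only [Polynomial.finset_sum_coeff] at h2
  rw [Finset.sum_congr rfl (fun i hi => coeff_basis s v hvs hi)] at h2
  rw [h2, Polynomial.coeff_one]
  simp; omega

lemma sum_inv_prod_eq_zero' (s : Finset ℕ) (v : ℕ → ℝ) (hvs : Set.InjOn v s)
    (hs : 2 ≤ #s) : ∑ i ∈ s, ∏ j ∈ s.erase i, (v j - v i)⁻¹ = 0 := by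
  have h := sum_inv_prod_eq_zero s v hvs hs
  have : ∀ i ∈ s, ∏ j ∈ s.erase i, (v j - v i)⁻¹
      = (-1)^(#s - 1) * ∏ j ∈ s.erase i, (v i - v j)⁻¹ := by
    intro i hi
    rw [← Finset.card_erase_of_mem hi, ← Finset.prod_const, ← Finset.prod_mul_distrib]
    refine Finset.prod_congr rfl fun j hj => ?_
    rw [neg_one_mul, ← inv_neg, neg_sub]
  rw [Finset.sum_congr rfl this, ← Finset.mul_sum, h, mul_zero]

open intervalIntegral Real

lemma integral_exp_mul (c : ℝ) (hc : c ≠ 0) (t : ℝ) :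
    ∫ s in (0:ℝ)..t, Real.exp (c * s) = (Real.exp (c * t) - 1) / c := by
  have h : ∀ s : ℝ, HasDerivAt (fun x => Real.exp (c * x) / c) (Real.exp (c * s)) s := by
    intro s
    have := ((Real.hasDerivAt_exp (c * s)).comp s (hasDerivAt_id s |>.const_mul c))
    have h2 := this.div_const c
    have : c * Real.exp (c * s) / c = Real.exp (c * s) := by field_simp
    simpa [this, mul_comm] using h2
  rw [intervalIntegral.integral_eq_sub_of_hasDerivAt (fun s _ => h s)
    ((Real.continuous_exp.comp (continuous_const.mul continuous_id)).intervalIntegrable 0 t)]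
  simp [sub_div]

lemma conv_exp (a b t : ℝ) (h : a ≠ b) :
    ∫ s in (0:ℝ)..t, Real.exp (-a*(t-s)) * Real.exp (-b*s)
      = (Real.exp (-b*t) - Real.exp (-a*t))/(a-b) := by
  have : ∀ s : ℝ, Real.exp (-a*(t-s)) * Real.exp (-b*s)
      = Real.exp (-a*t) * Real.exp ((a-b)*s) := by
    intro s; rw [← Real.exp_add, ← Real.exp_add]; ring_nf
  rw [intervalIntegral.integral_congr (fun s _ => this s),
    intervalIntegral.integral_const_mul, integral_exp_mul _ (sub_ne_zero.mpr h)]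
  rw [mul_div_assoc']
  congr 1
  rw [mul_sub, ← Real.exp_add, mul_one]
  ring_nf


noncomputable def Efun (lam : ℕ → ℝ) (n : ℕ) (t : ℝ) : ℝ :=
  ∑ i ∈ Finset.Icc 1 n, (∏ j ∈ (Finset.Icc 1 n).erase i, (lam j - lam i)⁻¹) * Real.exp (-lam i * t)

lemma Efun_continuous (lam : ℕ → ℝ) (n : ℕ) : Continuous (Efun lam n) := by
  unfold Efun
  exact continuous_finset_sum _ fun i _ => (continuous_const.mul
    ((Real.continuous_exp.comp (continuous_const.mul continuous_id))))

lemma lam_lt (lam : ℕ → ℝ) (hmono : ∀ n, 1 ≤ n → lam n < lam (n + 1)) :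
    ∀ i j, 1 ≤ i → i < j → lam i < lam j := by
  intro i j hi hij
  induction j with
  | zero => omega
  | succ k ih =>
    rcases Nat.lt_or_ge i k with h | h
    · exact lt_trans (ih h) (hmono k (by omega))
    · have : i = k := by omega
      subst this; exact hmono i hi

lemma lam_injOn (lam : ℕ → ℝ) (hmono : ∀ n, 1 ≤ n → lam n < lam (n + 1)) (n : ℕ) :
    Set.InjOn lam (Finset.Icc 1 n) := by
  intro a ha b hb hab
  simp only [Finset.coe_Icc, Set.mem_Icc] at ha hb
  by_contra hne
  rcases Nat.lt_or_ge a b with h | h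
  · exact absurd hab (ne_of_lt (lam_lt lam hmono a b ha.1 h))
  · exact absurd hab.symm (ne_of_lt (lam_lt lam hmono b a hb.1 (by omega)))
lemma Efun_rec (lam : ℕ → ℝ) (hmono : ∀ n, 1 ≤ n → lam n < lam (n + 1))
    (n : ℕ) (hn : 1 ≤ n) (t : ℝ) :
    Efun lam (n+1) t = ∫ s in (0:ℝ)..t, Real.exp (-lam (n+1) * (t - s)) * Efun lam n s := by
  set a := lam (n+1) with ha
  have hins : Finset.Icc 1 (n+1) = insert (n+1) (Finset.Icc 1 n) := by
    exact (Finset.insert_Icc_right_eq_Icc_add_one (by omega)).symm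
  have hnotmem : n+1 ∉ Finset.Icc 1 n := by simp
  have hlt : ∀ i ∈ Finset.Icc 1 n, lam i < a := fun i hi =>
    lam_lt lam hmono i (n+1) (Finset.mem_Icc.mp hi).1 (by have := (Finset.mem_Icc.mp hi).2; omega)
  have hrhs : (∫ s in (0:ℝ)..t, Real.exp (-a * (t - s)) * Efun lam n s)
      = ∑ i ∈ Finset.Icc 1 n, (∏ j ∈ (Finset.Icc 1 n).erase i, (lam j - lam i)⁻¹) *
          ((Real.exp (-lam i * t) - Real.exp (-a * t)) / (a - lam i)) := by
    have hcong : ∀ s ∈ Set.uIcc (0:ℝ) t, Real.exp (-a*(t-s)) * Efun lam n s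
        = ∑ i ∈ Finset.Icc 1 n, (∏ j ∈ (Finset.Icc 1 n).erase i, (lam j - lam i)⁻¹) *
            (Real.exp (-a*(t-s)) * Real.exp (-lam i * s)) := by
      intro s _
      unfold Efun
      rw [Finset.mul_sum]
      exact Finset.sum_congr rfl fun i _ => by ring
    rw [intervalIntegral.integral_congr hcong,
        intervalIntegral.integral_finset_sum (fun i _ => Continuous.intervalIntegrable
          (by fun_prop) 0 t)]
    exact Finset.sum_congr rfl fun i hi => by
      rw [intervalIntegral.integral_const_mul, conv_exp a (lam i) t (ne_of_gt (hlt i hi))]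
  rw [hrhs]
  have hzero : ∑ i ∈ Finset.Icc 1 (n+1),
      ∏ j ∈ (Finset.Icc 1 (n+1)).erase i, (lam j - lam i)⁻¹ = 0 :=
    sum_inv_prod_eq_zero' _ lam (lam_injOn lam hmono (n+1)) (by rw [Nat.card_Icc]; omega)
  rw [hins, Finset.sum_insert hnotmem, Finset.erase_insert hnotmem] at hzero
  have herase : ∀ i ∈ Finset.Icc 1 n,
      (insert (n+1) (Finset.Icc 1 n)).erase i = insert (n+1) ((Finset.Icc 1 n).erase i) := by
    intro i hi
    exact Finset.erase_insert_of_ne (by intro h; exact hnotmem (h ▸ hi))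
  have hsum2 : ∀ i ∈ Finset.Icc 1 n,
      ∏ j ∈ (insert (n+1) (Finset.Icc 1 n)).erase i, (lam j - lam i)⁻¹
        = (a - lam i)⁻¹ * ∏ j ∈ (Finset.Icc 1 n).erase i, (lam j - lam i)⁻¹ := by
    intro i hi
    rw [herase i hi, Finset.prod_insert (fun h => hnotmem (Finset.erase_subset _ _ h))]
  rw [Finset.sum_congr rfl (fun i hi => by rw [hsum2 i hi])] at hzero
  unfold Efun
  rw [hins, Finset.sum_insert hnotmem, Finset.erase_insert hnotmem,
      Finset.sum_congr rfl (fun i hi => by rw [hsum2 i hi, mul_assoc])]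
  -- hzero : ∏_{j∈S}(λ_j − a)⁻¹ + Σ (a−λ_i)⁻¹ c_i = 0
  have hP : (∏ j ∈ Finset.Icc 1 n, (lam j - a)⁻¹)
      = - ∑ i ∈ Finset.Icc 1 n, (a - lam i)⁻¹ * ∏ j ∈ (Finset.Icc 1 n).erase i, (lam j - lam i)⁻¹ := by
    linarith [hzero]
  rw [hP]
  simp only [← ha]
  rw [neg_mul, Finset.sum_mul, neg_add_eq_sub, ← Finset.sum_sub_distrib]
  refine Finset.sum_congr rfl fun i hi => ?_
  rw [div_eq_mul_inv]
  ring

lemma Efun_bound (lam : ℕ → ℝ) (hmono : ∀ n, 1 ≤ n → lam n < lam (n + 1)) :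
    ∀ n, 1 ≤ n → ∀ t : ℝ, 0 ≤ t →
      |Efun lam n t| ≤ t ^ (n-1) * Real.exp (-lam 1 * t) / (Nat.factorial (n-1) : ℝ) := by
  intro n hn
  induction n, hn using Nat.le_induction with
  | base =>
    intro t ht
    have : Efun lam 1 t = Real.exp (-lam 1 * t) := by
      unfold Efun
      simp
    rw [this]
    simp [abs_of_nonneg (Real.exp_nonneg _)]
  | succ n hn ih =>
    intro t ht
    rw [Efun_rec lam hmono n hn t]
    have hcont : Continuous (fun s => Real.exp (-lam (n+1) * (t - s)) * Efun lam n s) :=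
      (by fun_prop : Continuous fun s => Real.exp (-lam (n+1) * (t-s))).mul (Efun_continuous lam n)
    calc |∫ s in (0:ℝ)..t, Real.exp (-lam (n+1) * (t - s)) * Efun lam n s|
        ≤ ∫ s in (0:ℝ)..t, |Real.exp (-lam (n+1) * (t - s)) * Efun lam n s| :=
          intervalIntegral.abs_integral_le_integral_abs ht
      _ ≤ ∫ s in (0:ℝ)..t, Real.exp (-lam 1 * (t - s)) *
            (s ^ (n-1) * Real.exp (-lam 1 * s) / (Nat.factorial (n-1) : ℝ)) := by
          refine intervalIntegral.integral_mono_on ht (hcont.abs.intervalIntegrable 0 t)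
            ((by fun_prop : Continuous fun s:ℝ => Real.exp (-lam 1 * (t - s)) *
              (s ^ (n-1) * Real.exp (-lam 1 * s) / (Nat.factorial (n-1) : ℝ))).intervalIntegrable 0 t)
            fun s hs => ?_
          rw [abs_mul, abs_of_nonneg (Real.exp_nonneg _)]
          have h1 : Real.exp (-lam (n+1) * (t - s)) ≤ Real.exp (-lam 1 * (t - s)) := by
            apply Real.exp_le_exp.mpr
            have hl : lam 1 ≤ lam (n+1) :=
              le_of_lt (lam_lt lam hmono 1 (n+1) le_rfl (by omega))
            nlinarith [hs.2, hs.1]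
          exact mul_le_mul h1 (ih s hs.1) (abs_nonneg _) (Real.exp_nonneg _)
      _ = t ^ n * Real.exp (-lam 1 * t) / (Nat.factorial n : ℝ) := by
          have heq : ∀ s : ℝ, Real.exp (-lam 1 * (t - s)) *
              (s ^ (n-1) * Real.exp (-lam 1 * s) / (Nat.factorial (n-1) : ℝ))
              = (Real.exp (-lam 1 * t) / (Nat.factorial (n-1) : ℝ)) * s ^ (n-1) := by
            intro s
            have he : Real.exp (-lam 1 * (t - s)) * Real.exp (-lam 1 * s)
                = Real.exp (-lam 1 * t) := by rw [← Real.exp_add]; ring_nf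
            rw [div_eq_mul_inv, div_eq_mul_inv]
            linear_combination (s ^ (n - 1) * ((Nat.factorial (n-1):ℝ))⁻¹) * he
          rw [intervalIntegral.integral_congr (fun s _ => heq s),
            intervalIntegral.integral_const_mul, integral_pow]
          have hfac : (Nat.factorial n : ℝ) = n * (Nat.factorial (n-1) : ℝ) := by
            rw [← Nat.cast_mul, ← Nat.mul_factorial_pred (by omega)]
          have hnn : n - 1 + 1 = n := by omega
          rw [hnn, hfac]
          have h0 : (0:ℝ) ^ n = 0 := zero_pow (by omega)
          rw [h0]
          field_simp
          rw [Nat.cast_sub (by omega), Nat.cast_one]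
          ring
lemma diff_eq (lam : ℕ → ℝ) (hmono : ∀ n, 1 ≤ n → lam n < lam (n + 1))
    (m M : ℕ) (hm : 1 ≤ m) (hM : m ≤ M) (t : ℝ) :
    Real.exp (-lam m * t) - ∑ k ∈ (Finset.Icc 1 (M+1)).erase m,
      (-(∏ j ∈ (Finset.Icc 1 (M+1)).erase m, (lam j - lam m)) *
        ∏ j ∈ (Finset.Icc 1 (M+1)).erase k, (lam j - lam k)⁻¹) * Real.exp (-lam k * t)
    = (∏ j ∈ (Finset.Icc 1 (M+1)).erase m, (lam j - lam m)) * Efun lam (M+1) t := by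
  set S := Finset.Icc 1 (M+1) with hS
  have hmS : m ∈ S := Finset.mem_Icc.mpr ⟨hm, by omega⟩
  set P := ∏ j ∈ S.erase m, (lam j - lam m) with hP
  unfold Efun
  rw [← hS, ← Finset.add_sum_erase S _ hmS, mul_add, Finset.mul_sum]
  have hPd : P * ((∏ j ∈ S.erase m, (lam j - lam m)⁻¹) * Real.exp (-lam m * t))
      = Real.exp (-lam m * t) := by
    rw [← mul_assoc, hP, ← Finset.prod_mul_distrib]
    have : ∀ j ∈ S.erase m, (lam j - lam m) * (lam j - lam m)⁻¹ = 1 := by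
      intro j hj
      refine mul_inv_cancel₀ (sub_ne_zero.mpr ?_)
      exact fun h => (Finset.mem_erase.mp hj).1
        (lam_injOn lam hmono (M+1) (Finset.mem_coe.mpr (Finset.mem_of_mem_erase hj)) (Finset.mem_coe.mpr hmS) h)
    rw [Finset.prod_congr rfl this, Finset.prod_const_one, one_mul]
  rw [hPd, sub_eq_add_neg, ← Finset.sum_neg_distrib]
  congr 1
  refine Finset.sum_congr rfl fun k hk => ?_
  ring

/-- The distance in `L²(0,T)` from `t ↦ exp (-λ_m t)` to the closed linear span of the
functions `t ↦ exp (-λ_k t)`, `k ≥ 1`, `k ≠ m`. -/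
noncomputable def dTm (T : ℝ) (lam : ℕ → ℝ) (m : ℕ) : ℝ :=
  sInf { r : ℝ | ∃ (s : Finset ℕ) (c : ℕ → ℝ),
    (∀ k ∈ s, 1 ≤ k ∧ k ≠ m) ∧
    r = (∫ t in Set.Ioc 0 T,
        (Real.exp (-lam m * t) - ∑ k ∈ s, c k * Real.exp (-lam k * t)) ^ 2) ^ ((1:ℝ)/2) }

theorem dist_upper_bound (T : ℝ) (hT : 0 < T) (lam : ℕ → ℝ) (hl1 : 0 < lam 1)
    (hmono : ∀ n, 1 ≤ n → lam n < lam (n + 1)) :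
    ∀ m, 1 ≤ m → ∀ M : ℕ, m ≤ M →
      dTm T lam m ≤
        (∏ i ∈ (Finset.Icc 1 (M + 1)).erase m, |lam i - lam m|) *
          (∫ s in Set.Ioc 0 T,
            s ^ (2 * M) / (Nat.factorial M : ℝ) ^ 2 * Real.exp (-2 * lam 1 * s))
            ^ ((1:ℝ)/2) ∧
      (∏ i ∈ (Finset.Icc 1 (M + 1)).erase m, |lam i - lam m|) *
          (∫ s in Set.Ioc 0 T,
            s ^ (2 * M) / (Nat.factorial M : ℝ) ^ 2 * Real.exp (-2 * lam 1 * s))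
            ^ ((1:ℝ)/2) ≤
        (∏ i ∈ (Finset.Icc 1 (M + 1)).erase m, |lam i - lam m|) *
          (T ^ M / (Nat.factorial M : ℝ)) *
          Real.sqrt (2 * T / (2 * (M : ℝ) + 1 + 2 * T * lam 1)) := by
  intro m hm M hM
  have hmS : m ∈ Finset.Icc 1 (M+1) := Finset.mem_Icc.mpr ⟨hm, by omega⟩
  set E := (Finset.Icc 1 (M+1)).erase m with hE
  set P := ∏ j ∈ E, (lam j - lam m) with hPdef
  set c : ℕ → ℝ := fun k => -P * ∏ j ∈ (Finset.Icc 1 (M+1)).erase k, (lam j - lam k)⁻¹ with hc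
  set f : ℝ → ℝ := fun t =>
    Real.exp (-lam m * t) - ∑ k ∈ E, c k * Real.exp (-lam k * t) with hf
  have hfeq : ∀ t, f t = P * Efun lam (M+1) t := fun t => diff_eq lam hmono m M hm hM t
  have hfcont : Continuous f := by
    have : f = fun t => P * Efun lam (M+1) t := funext hfeq
    rw [this]
    exact continuous_const.mul (Efun_continuous lam (M+1))
  set g : ℝ → ℝ := fun s =>
    s ^ (2 * M) / (Nat.factorial M : ℝ) ^ 2 * Real.exp (-2 * lam 1 * s) with hg
  have hgcont : Continuous g := by fun_prop
  have hgnn : ∀ s : ℝ, 0 ≤ s → 0 ≤ g s := by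
    intro s hs
    have : (0:ℝ) < (Nat.factorial M : ℝ) := by positivity
    positivity
  -- pointwise square bound
  have hsq : ∀ t : ℝ, 0 ≤ t → (f t) ^ 2 ≤ P ^ 2 * g t := by
    intro t ht
    have hb := Efun_bound lam hmono (M+1) (by omega) t ht
    simp only [Nat.add_sub_cancel] at hb
    have h1 : (Efun lam (M+1) t) ^ 2
        ≤ (t ^ M * Real.exp (-lam 1 * t) / (Nat.factorial M : ℝ)) ^ 2 := by
      calc (Efun lam (M+1) t) ^ 2 = |Efun lam (M+1) t| ^ 2 := (sq_abs _).symm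
        _ ≤ _ := pow_le_pow_left₀ (abs_nonneg _) hb 2
    have h2 : (t ^ M * Real.exp (-lam 1 * t) / (Nat.factorial M : ℝ)) ^ 2 = g t := by
      have he : Real.exp (-lam 1 * t) ^ 2 = Real.exp (-2 * lam 1 * t) := by
        rw [sq, ← Real.exp_add]; ring_nf
      rw [hg]
      simp only
      rw [div_pow, mul_pow, ← pow_mul, he, mul_comm M 2]
      ring
    rw [hfeq t, mul_pow]
    exact mul_le_mul_of_nonneg_left (h2 ▸ h1) (sq_nonneg P)
  set I := ∫ s in Set.Ioc 0 T, g s with hI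
  have hIint : IntegrableOn g (Set.Ioc 0 T) := hgcont.integrableOn_Ioc
  have hf2int : IntegrableOn (fun t => (f t) ^ 2) (Set.Ioc 0 T) :=
    (hfcont.pow 2).integrableOn_Ioc
  have hInn : 0 ≤ I := setIntegral_nonneg measurableSet_Ioc fun s hs => hgnn s hs.1.le
  have hfIne : (∫ t in Set.Ioc 0 T, (f t) ^ 2) ≤ P ^ 2 * I := by
    have : (∫ t in Set.Ioc 0 T, (f t) ^ 2) ≤ ∫ t in Set.Ioc 0 T, P ^ 2 * g t :=
      setIntegral_mono_on hf2int (hIint.const_mul _) measurableSet_Ioc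
        fun t htm => hsq t htm.1.le
    rwa [MeasureTheory.integral_const_mul] at this
  have hf2nn : 0 ≤ ∫ t in Set.Ioc 0 T, (f t) ^ 2 :=
    integral_nonneg fun t => sq_nonneg _
  have h1 : dTm T lam m ≤ (∫ t in Set.Ioc 0 T, (f t) ^ 2) ^ ((1:ℝ)/2) := by
    apply csInf_le
    · refine ⟨0, fun r hr => ?_⟩
      obtain ⟨s, cc, hcc, rfl⟩ := hr
      exact Real.rpow_nonneg (integral_nonneg fun t => sq_nonneg _) _
    · exact ⟨E, c, fun k hk => ⟨(Finset.mem_Icc.mp (Finset.mem_of_mem_erase hk)).1,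
        (Finset.mem_erase.mp hk).1⟩, rfl⟩
  have h2 : (∫ t in Set.Ioc 0 T, (f t) ^ 2) ^ ((1:ℝ)/2) ≤ (P ^ 2 * I) ^ ((1:ℝ)/2) :=
    Real.rpow_le_rpow hf2nn hfIne (by norm_num)
  have h3 : (P ^ 2 * I) ^ ((1:ℝ)/2) = |P| * I ^ ((1:ℝ)/2) := by
    rw [Real.mul_rpow (sq_nonneg P) hInn, ← Real.sqrt_eq_rpow, Real.sqrt_sq_eq_abs]
  have habs : (∏ i ∈ E, |lam i - lam m|) = |P| := (Finset.abs_prod _ _).symm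
  constructor
  · calc dTm T lam m ≤ (∫ t in Set.Ioc 0 T, (f t) ^ 2) ^ ((1:ℝ)/2) := h1
      _ ≤ (P ^ 2 * I) ^ ((1:ℝ)/2) := h2
      _ = |P| * I ^ ((1:ℝ)/2) := h3
      _ = (∏ i ∈ E, |lam i - lam m|) * I ^ ((1:ℝ)/2) := by rw [habs]
  -- second inequality
  · set D : ℝ := 2 * (M : ℝ) + 1 + 2 * T * lam 1 with hD
    have hDpos : 0 < D := by positivity
    -- key integral bound
    have hJ : (∫ s in Set.Ioc 0 T, s ^ (2*M) * Real.exp (-2 * lam 1 * s))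
        ≤ T ^ (2*M) * (2 * T / D) := by
      rcases le_or_gt (2 * T * lam 1) (2 * (M:ℝ) + 1) with hcase | hcase
      · have hb1 : (∫ s in Set.Ioc 0 T, s ^ (2*M) * Real.exp (-2 * lam 1 * s))
            ≤ ∫ s in Set.Ioc 0 T, s ^ (2*M) := by
          refine setIntegral_mono_on
            ((by fun_prop : Continuous fun s:ℝ => s ^ (2*M) * Real.exp (-2*lam 1*s)).integrableOn_Ioc)
            ((by fun_prop : Continuous fun s:ℝ => s ^ (2*M)).integrableOn_Ioc)
            measurableSet_Ioc fun s hs => ?_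
          have : Real.exp (-2 * lam 1 * s) ≤ 1 := by
            rw [Real.exp_le_one_iff]
            nlinarith [hs.1]
          nlinarith [pow_nonneg hs.1.le (2*M)]
        have hb2 : (∫ s in Set.Ioc 0 T, s ^ (2*M) : ℝ) = T ^ (2*M+1) / (2*(M:ℝ)+1) := by
          rw [← intervalIntegral.integral_of_le hT.le, integral_pow, zero_pow (by omega)]
          push_cast; ring
        have hb3 : T ^ (2*M+1) / (2*(M:ℝ)+1) ≤ T ^ (2*M) * (2 * T / D) := by
          rw [div_le_iff₀ (by positivity), pow_succ]
          have hTp : (0:ℝ) ≤ T ^ (2*M) := by positivity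
          rw [mul_comm (T ^ (2*M)) (2*T/D), mul_assoc, div_mul_eq_mul_div, le_div_iff₀ hDpos]
          nlinarith [mul_nonneg hTp hT.le]
        calc (∫ s in Set.Ioc 0 T, s ^ (2*M) * Real.exp (-2 * lam 1 * s))
            ≤ ∫ s in Set.Ioc 0 T, s ^ (2*M) := hb1
          _ = T ^ (2*M+1) / (2*(M:ℝ)+1) := hb2
          _ ≤ T ^ (2*M) * (2 * T / D) := hb3
      · have hb1 : (∫ s in Set.Ioc 0 T, s ^ (2*M) * Real.exp (-2 * lam 1 * s))
            ≤ ∫ s in Set.Ioc 0 T, T ^ (2*M) * Real.exp (-2 * lam 1 * s) := by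
          refine setIntegral_mono_on
            ((by fun_prop : Continuous fun s:ℝ => s ^ (2*M) * Real.exp (-2*lam 1*s)).integrableOn_Ioc)
            ((by fun_prop : Continuous fun s:ℝ => T ^ (2*M) * Real.exp (-2*lam 1*s)).integrableOn_Ioc)
            measurableSet_Ioc fun s hs => ?_
          have hsp : s ^ (2*M) ≤ T ^ (2*M) := pow_le_pow_left₀ hs.1.le hs.2 _
          exact mul_le_mul_of_nonneg_right hsp (Real.exp_nonneg _)
        have hb2 : (∫ s in Set.Ioc 0 T, T ^ (2*M) * Real.exp (-2 * lam 1 * s))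
            = T ^ (2*M) * ((1 - Real.exp (-(2 * lam 1) * T)) / (2 * lam 1)) := by
          rw [MeasureTheory.integral_const_mul, ← intervalIntegral.integral_of_le hT.le]
          congr 1
          have : ∀ s : ℝ, Real.exp (-2 * lam 1 * s) = Real.exp ((-(2 * lam 1)) * s) := by
            intro s; ring_nf
          rw [intervalIntegral.integral_congr fun s _ => this s,
            integral_exp_mul _ (by nlinarith) T]
          rw [div_eq_div_iff (by nlinarith) (by nlinarith)]
          ring
        have hb3 : T ^ (2*M) * ((1 - Real.exp (-(2 * lam 1) * T)) / (2 * lam 1))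
            ≤ T ^ (2*M) * (2 * T / D) := by
          have hTp : (0:ℝ) ≤ T ^ (2*M) := by positivity
          refine mul_le_mul_of_nonneg_left ?_ hTp
          have he : 0 < Real.exp (-(2 * lam 1) * T) := Real.exp_pos _
          rw [div_le_div_iff₀ (by linarith) hDpos]
          nlinarith [he, hD, hcase, hT, hl1]
        calc (∫ s in Set.Ioc 0 T, s ^ (2*M) * Real.exp (-2 * lam 1 * s))
            ≤ ∫ s in Set.Ioc 0 T, T ^ (2*M) * Real.exp (-2 * lam 1 * s) := hb1
          _ = T ^ (2*M) * ((1 - Real.exp (-(2 * lam 1) * T)) / (2 * lam 1)) := hb2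
          _ ≤ T ^ (2*M) * (2 * T / D) := hb3
    have hfacpos : (0:ℝ) < (Nat.factorial M : ℝ) := by positivity
    have hIeq : I = ((Nat.factorial M : ℝ) ^ 2)⁻¹
        * ∫ s in Set.Ioc 0 T, s ^ (2*M) * Real.exp (-2 * lam 1 * s) := by
      rw [hI, ← MeasureTheory.integral_const_mul]
      refine setIntegral_congr_fun measurableSet_Ioc fun s _ => ?_
      rw [hg]; simp only; ring
    have hkey : I ≤ (T ^ M / (Nat.factorial M : ℝ)) ^ 2 * (2 * T / D) := by
      rw [hIeq]
      have : (T ^ M / (Nat.factorial M : ℝ)) ^ 2 * (2 * T / D)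
          = ((Nat.factorial M : ℝ) ^ 2)⁻¹ * (T ^ (2*M) * (2 * T / D)) := by
        rw [div_pow, ← pow_mul, mul_comm M 2]; ring
      rw [this]
      exact mul_le_mul_of_nonneg_left hJ (by positivity)
    have hsq2 : I ^ ((1:ℝ)/2) ≤ (T ^ M / (Nat.factorial M : ℝ)) * Real.sqrt (2 * T / D) := by
      rw [← Real.sqrt_eq_rpow]
      have := Real.sqrt_le_sqrt hkey
      refine this.trans (le_of_eq ?_)
      rw [Real.sqrt_mul (sq_nonneg _), Real.sqrt_sq (by positivity)]
    calc (∏ i ∈ E, |lam i - lam m|) * I ^ ((1:ℝ)/2)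
        ≤ (∏ i ∈ E, |lam i - lam m|) * ((T ^ M / (Nat.factorial M : ℝ)) * Real.sqrt (2 * T / D)) :=
          mul_le_mul_of_nonneg_left hsq2 (Finset.prod_nonneg fun i _ => abs_nonneg _)
      _ = (∏ i ∈ E, |lam i - lam m|) * (T ^ M / (Nat.factorial M : ℝ)) * Real.sqrt (2 * T / D) := by
          ring
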